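/- arXiv:2001.09195 — 2 statements merged into one kernel-verified Lean document; each statement's English description precedes it below -/
import Mathlib

section
/- Let X and Y be compact Hausdorff spaces. The map sending a continuous function f : X → Y to the unital star-algebra homomorphism C(Y, ℂ) → C(X, ℂ) given by g ↦ g ∘ f is a bijection between the set of continuous maps X → Y and the set of unital star-algebra homomorphisms C(Y, ℂ) → C(X, ℂ). (That is, the contravariant functor C(−, ℂ) from compact Hausdorff spaces to commutative C*-algebras is full and faithful.) -/
/-- **Full faithfulness of `C(−, ℂ)`.** For compact Hausdorff spaces `X` and `Y`, the map
sending a continuous function `f : X → Y` to the unital star-algebra homomorphism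
`C(Y, ℂ) →⋆ₐ[ℂ] C(X, ℂ)` given by `g ↦ g ∘ f` is a bijection between the continuous maps
`X → Y` and the unital star-algebra homomorphisms `C(Y, ℂ) →⋆ₐ[ℂ] C(X, ℂ)`. -/
theorem compStarAlgHom_bijective
    (X Y : Type*) [TopologicalSpace X] [CompactSpace X] [T2Space X]
    [TopologicalSpace Y] [CompactSpace Y] [T2Space Y] :
    Function.Bijective
      (fun f : C(X, Y) => ContinuousMap.compStarAlgHom' ℂ ℂ f) := by
  open WeakDual.CharacterSpace in
  constructor
  · intro f g h
    ext x
    have := (homeoEval Y ℂ).injective (a₁ := f x) (a₂ := g x)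
    apply this
    ext φ
    have h1 : (homeoEval Y ℂ (f x) : C(Y, ℂ) → ℂ) φ =
        (ContinuousMap.compStarAlgHom' ℂ ℂ f φ) x := rfl
    have h2 : (homeoEval Y ℂ (g x) : C(Y, ℂ) → ℂ) φ =
        (ContinuousMap.compStarAlgHom' ℂ ℂ g φ) x := rfl
    rw [h1, h2, show ContinuousMap.compStarAlgHom' ℂ ℂ f = ContinuousMap.compStarAlgHom' ℂ ℂ g from h]
  · intro φ
    refine ⟨((ContinuousMap.mk (homeoEval Y ℂ).symm (homeoEval Y ℂ).symm.continuous).comp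
      (compContinuousMap φ)).comp (ContinuousMap.mk (homeoEval X ℂ) (homeoEval X ℂ).continuous), ?_⟩
    ext g x
    show g ((homeoEval Y ℂ).symm (compContinuousMap φ (homeoEval X ℂ x))) = φ g x
    have : homeoEval Y ℂ ((homeoEval Y ℂ).symm (compContinuousMap φ (homeoEval X ℂ x))) =
        compContinuousMap φ (homeoEval X ℂ x) := (homeoEval Y ℂ).apply_symm_apply _
    calc g ((homeoEval Y ℂ).symm (compContinuousMap φ (homeoEval X ℂ x)))
        = (homeoEval Y ℂ ((homeoEval Y ℂ).symm
            (compContinuousMap φ (homeoEval X ℂ x))) : C(Y, ℂ) → ℂ) g := rfl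
      _ = (compContinuousMap φ (homeoEval X ℂ x) : C(Y, ℂ) → ℂ) g := by rw [this]
      _ = φ g x := rfl
end

section
/- Let B be a Boolean algebra. The map sending b ∈ B to the set { f | f(b) = ⊤ } of bounded lattice homomorphisms f : B → Bool (where Bool is the two-element Boolean algebra) is an injective map from B into the powerset of the set of all bounded lattice homomorphisms B → Bool, and it preserves ⊤, ⊥, finite joins, finite meets, and complements. Hence every Boolean algebra embeds into a powerset Boolean algebra. -/
open Classical in
/-- Separation lemma: if `¬ a ≤ b` there is a bounded lattice hom to `Bool`
sending `a` to `⊤` and `b` to `⊥`. -/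
lemma exists_hom_of_not_le {B : Type*} [BooleanAlgebra B] {a b : B} (h : ¬ a ≤ b) :
    ∃ f : BoundedLatticeHom B Bool, f a = ⊤ ∧ f b = ⊥ := by
  have hdisj : Disjoint ((Order.PFilter.principal a : Order.PFilter B) : Set B)
      ((Order.Ideal.principal b : Order.Ideal B) : Set B) := by
    rw [Set.disjoint_left]
    intro x hx hx'
    exact h (le_trans (Order.PFilter.mem_principal.mp hx)
      (Order.Ideal.mem_principal.mp hx'))
  obtain ⟨J, hJprime, hIJ, hdisjJ⟩ :=
    DistribLattice.prime_ideal_of_disjoint_filter_ideal hdisj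
  have hbJ : b ∈ J := hIJ (Order.Ideal.mem_principal.mpr le_rfl)
  have haJ : a ∉ J := fun ha =>
    Set.disjoint_left.mp hdisjJ (Order.PFilter.mem_principal.mpr le_rfl) ha
  have key : ∀ x y : B, (x ⊓ y ∉ J) ↔ (x ∉ J ∧ y ∉ J) := by
    intro x y
    constructor
    · intro hxy
      exact ⟨fun hx => hxy (J.lower inf_le_left hx),
             fun hy => hxy (J.lower inf_le_right hy)⟩
    · rintro ⟨hx, hy⟩ hxy
      rcases hJprime.mem_or_mem hxy with h' | h' <;> [exact hx h'; exact hy h']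
  have keysup : ∀ x y : B, (x ⊔ y ∉ J) ↔ (x ∉ J ∨ y ∉ J) := by
    intro x y
    constructor
    · intro hxy
      by_contra hc
      push_neg at hc
      exact hxy (J.sup_mem hc.1 hc.2)
    · rintro (hx | hy) hxy
      · exact hx (J.lower le_sup_left hxy)
      · exact hy (J.lower le_sup_right hxy)
  refine ⟨⟨⟨⟨fun x => decide (x ∉ J), ?_⟩, ?_⟩, ?_, ?_⟩, ?_, ?_⟩
  · intro x y
    by_cases hx : x ∈ J <;> by_cases hy : y ∈ J <;>
      simp [keysup x y, hx, hy, show (⊤:Bool) = true from rfl, show (⊥:Bool) = false from rfl, show ∀ p q : Bool, p ⊔ q = (p || q) from fun _ _ => rfl]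
  · intro x y
    by_cases hx : x ∈ J <;> by_cases hy : y ∈ J <;>
      simp [key x y, hx, hy, show (⊤:Bool) = true from rfl, show (⊥:Bool) = false from rfl, show ∀ p q : Bool, p ⊓ q = (p && q) from fun _ _ => rfl]
  · have : ⊤ ∉ J := fun ht =>
      Set.disjoint_left.mp hdisjJ (Order.PFilter.mem_principal.mpr le_top) ht
    simpa using this
  · have : ⊥ ∈ J := J.bot_mem
    simpa using this
  · simpa using haJ
  · simpa using hbJ

/-- **Stone representation theorem.** For a Boolean algebra `B`, the map sending `b ∈ B` to
the set `{ f | f b = ⊤ }` of bounded lattice homomorphisms `f : B → Bool` is an injection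
of `B` into the powerset of the set of bounded lattice homomorphisms `B → Bool`, and it
preserves `⊤`, `⊥`, finite joins, finite meets, and complements.  Hence every Boolean
algebra embeds into a powerset Boolean algebra. -/
theorem stone_representation
    (B : Type*) [BooleanAlgebra B]
    (V : B → Set (BoundedLatticeHom B Bool))
    (hV : ∀ (b : B) (f : BoundedLatticeHom B Bool), f ∈ V b ↔ f b = ⊤) :
    Function.Injective V ∧
      V ⊤ = Set.univ ∧
      V ⊥ = ∅ ∧
      (∀ a b : B, V (a ⊔ b) = V a ∪ V b) ∧
      (∀ a b : B, V (a ⊓ b) = V a ∩ V b) ∧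
      (∀ a : B, V aᶜ = (V a)ᶜ) := by
  have hle : ∀ a b : B, V a ⊆ V b → a ≤ b := by
    intro a b hab
    by_contra h
    obtain ⟨f, hfa, hfb⟩ := exists_hom_of_not_le h
    have := (hV b f).mp (hab ((hV a f).mpr hfa))
    rw [hfb] at this
    exact absurd this (by simp)
  refine ⟨fun a b hab => le_antisymm (hle a b hab.le) (hle b a hab.ge), ?_, ?_, ?_, ?_, ?_⟩
  · ext f; simp [hV]
  · ext f
    simp only [hV, Set.mem_empty_iff_false, iff_false]
    simp [map_bot f]
  · intro a b
    ext f
    simp only [hV, Set.mem_union, map_sup]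
    rcases f a with _ | _ <;> rcases f b with _ | _ <;> simp [hV] <;> rfl
  · intro a b
    ext f
    simp only [hV, Set.mem_inter_iff, map_inf]
    rcases f a with _ | _ <;> rcases f b with _ | _ <;> simp [hV] <;> rfl
  · intro a
    ext f
    simp only [hV, Set.mem_compl_iff]
    have h1 : f a ⊓ f aᶜ = ⊥ := by rw [← map_inf]; simp [map_bot f]
    have h2 : f a ⊔ f aᶜ = ⊤ := by rw [← map_sup]; simp [map_top f]
    constructor
    · intro h hc
      rw [h, hc] at h1
      simpa using h1
    · intro h
      rcases Bool.eq_false_or_eq_true (f aᶜ) with h' | h'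
      · exact h'
      · exfalso
        apply h
        rw [← h2, show f aᶜ = ⊥ from h']
        simp
end
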